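/- Let (k_j)_{j≥1} be a sequence of even natural numbers with k_1 ≥ 6 and k_{j+1} - k_j ≥ 6 for all j ≥ 1. Define a_0 = a_1 = 1, a_k = 2 if k = k_j - 1 or k = k_j + 1 for some j ≥ 1, and a_k = 4 otherwise. Let t_k be the denominators of the convergents of [a_0,a_1,a_2,...]. Then t_k ≡ 3 (mod 4) if k = k_j - 1 for some j, and t_k ≡ 1 (mod 4) otherwise. -/
import Mathlib


/-- Numerators of continued fraction convergents: `cfS a k = s_k`
(with `s_{-1} = 1`, `s_0 = a_0`, `s_k = a_k s_{k-1} + s_{k-2}`). -/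
def cfS (a : ℕ → ℤ) : ℕ → ℤ
  | 0 => a 0
  | 1 => a 1 * a 0 + 1
  | (k+2) => a (k+2) * cfS a (k+1) + cfS a k

/-- Denominators of continued fraction convergents: `cfT a k = t_k`
(with `t_{-1} = 0`, `t_0 = 1`, `t_k = a_k t_{k-1} + t_{k-2}`). -/
def cfT (a : ℕ → ℤ) : ℕ → ℤ
  | 0 => 1
  | 1 => a 1
  | (k+2) => a (k+2) * cfT a (k+1) + cfT a k

theorem denominators_mod_four_construction_one
    (kseq : ℕ → ℕ) (heven : ∀ j, 1 ≤ j → Even (kseq j)) (h1 : 6 ≤ kseq 1)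
    (hgap : ∀ j, 1 ≤ j → kseq j + 6 ≤ kseq (j+1))
    (a : ℕ → ℤ) (ha0 : a 0 = 1) (ha1 : a 1 = 1)
    (ha2 : ∀ n, 2 ≤ n → (∃ j, 1 ≤ j ∧ (n = kseq j - 1 ∨ n = kseq j + 1)) → a n = 2)
    (ha4 : ∀ n, 2 ≤ n → ¬(∃ j, 1 ≤ j ∧ (n = kseq j - 1 ∨ n = kseq j + 1)) → a n = 4) :
    ∀ n, ((∃ j, 1 ≤ j ∧ n = kseq j - 1) → cfT a n ≡ 3 [ZMOD 4]) ∧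
      (¬(∃ j, 1 ≤ j ∧ n = kseq j - 1) → cfT a n ≡ 1 [ZMOD 4]) := by
  -- every kseq j (j ≥ 1) is at least 6
  have hk6 : ∀ j, 1 ≤ j → 6 ≤ kseq j := by
    intro j hj
    induction j with
    | zero => omega
    | succ m ih =>
      rcases Nat.eq_or_lt_of_le hj with h | h
      · have hm0 : m = 0 := by omega
        subst hm0
        exact h1
      · have hm : 1 ≤ m := by omega
        have := hgap m hm
        have := ih hm
        omega
  -- strict separation between distinct indices
  have hmono : ∀ j d, 1 ≤ j → kseq j + 6 ≤ kseq (j + (d+1)) := by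
    intro j d hj
    induction d with
    | zero => exact hgap j hj
    | succ m ih =>
      have e : j + (m+1+1) = j + (m+1) + 1 := by omega
      rw [e]
      have := hgap (j + (m+1)) (by omega)
      omega
  have hsep : ∀ j j', 1 ≤ j → 1 ≤ j' → j ≠ j' →
      kseq j + 6 ≤ kseq j' ∨ kseq j' + 6 ≤ kseq j := by
    intro j j' hj hj' hne
    rcases Nat.lt_or_ge j j' with h | h
    · left
      obtain ⟨d, hd⟩ : ∃ d, j' = j + (d+1) := ⟨j' - j - 1, by omega⟩
      rw [hd]; exact hmono j d hj
    · right
      have h' : j' < j := by omega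
      obtain ⟨d, hd⟩ : ∃ d, j = j' + (d+1) := ⟨j - j' - 1, by omega⟩
      rw [hd]; exact hmono j' d hj'
  intro n
  induction n using Nat.strong_induction_on with
  | _ n ih =>
    match n with
    | 0 =>
      constructor
      · rintro ⟨j, hj, hn⟩
        have := hk6 j hj
        omega
      · intro _
        simp [cfT, Int.ModEq]
    | 1 =>
      constructor
      · rintro ⟨j, hj, hn⟩
        have := hk6 j hj
        omega
      · intro _
        simp [cfT, ha1, Int.ModEq]
    | (m+2) =>
      have ihm := ih m (by omega)
      have ihm1 := ih (m+1) (by omega)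
      by_cases hminus : ∃ j, 1 ≤ j ∧ m+2 = kseq j - 1
      · -- n = kⱼ - 1 : a n = 2, t_{n-1} ≡ 1, t_{n-2} ≡ 1, so t_n ≡ 3
        obtain ⟨j, hj, hjm⟩ := hminus
        have hk := hk6 j hj
        have hkm : kseq j = m + 3 := by omega
        have hev := heven j hj
        obtain ⟨r, hr⟩ := hev
        have ha : a (m+2) = 2 := ha2 (m+2) (by omega) ⟨j, hj, Or.inl (by omega)⟩
        -- m+1 = kⱼ - 2 is even, not of form k_{j'} - 1 (odd)
        have h1' : ¬ ∃ j', 1 ≤ j' ∧ m+1 = kseq j' - 1 := by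
          rintro ⟨j', hj', hmj'⟩
          have hk' := hk6 j' hj'
          obtain ⟨r', hr'⟩ := heven j' hj'
          omega
        -- m = kⱼ - 3 : if m = k_{j'} - 1 then k_{j'} = kⱼ - 2, contradiction with sep
        have h0' : ¬ ∃ j', 1 ≤ j' ∧ m = kseq j' - 1 := by
          rintro ⟨j', hj', hmj'⟩
          have hk' := hk6 j' hj'
          have hne : j ≠ j' := by intro h; rw [h] at hkm; omega
          rcases hsep j j' hj hj' hne with h | h <;> omega
        have hv1 := ihm1.2 h1'
        have hv0 := ihm.2 h0'
        constructor
        · intro _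
          show cfT a (m+2) ≡ 3 [ZMOD 4]
          simp only [cfT, ha, Int.ModEq] at *
          omega
        · intro hcon
          exact absurd ⟨j, hj, hjm⟩ hcon
      · by_cases hplus : ∃ j, 1 ≤ j ∧ m+2 = kseq j + 1
        · -- n = kⱼ + 1 : a n = 2, t_{n-1} ≡ 1, t_{n-2} ≡ 3, so t_n ≡ 1
          obtain ⟨j, hj, hjm⟩ := hplus
          have hk := hk6 j hj
          have hkm : kseq j = m + 1 := by omega
          obtain ⟨r, hr⟩ := heven j hj
          have ha : a (m+2) = 2 := ha2 (m+2) (by omega) ⟨j, hj, Or.inr (by omega)⟩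
          -- m+1 = kⱼ is even, not of form k_{j'} - 1
          have h1' : ¬ ∃ j', 1 ≤ j' ∧ m+1 = kseq j' - 1 := by
            rintro ⟨j', hj', hmj'⟩
            have hk' := hk6 j' hj'
            obtain ⟨r', hr'⟩ := heven j' hj'
            omega
          -- m = kⱼ - 1 is of minus form
          have h0' : ∃ j', 1 ≤ j' ∧ m = kseq j' - 1 := ⟨j, hj, by omega⟩
          have hv1 := ihm1.2 h1'
          have hv0 := ihm.1 h0'
          constructor
          · rintro ⟨j', hj', hmj'⟩
            exact absurd ⟨j', hj', hmj'⟩ hminus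
          · intro _
            show cfT a (m+2) ≡ 1 [ZMOD 4]
            simp only [cfT, ha, Int.ModEq] at *
            omega
        · -- a n = 4, t_n ≡ t_{n-2} ≡ 1
          have ha : a (m+2) = 4 := by
            apply ha4 (m+2) (by omega)
            rintro ⟨j, hj, hc | hc⟩
            · exact hminus ⟨j, hj, hc⟩
            · exact hplus ⟨j, hj, hc⟩
          -- m not of minus form: else m+2 = kⱼ+1 contradicting hplus
          have h0' : ¬ ∃ j', 1 ≤ j' ∧ m = kseq j' - 1 := by
            rintro ⟨j', hj', hmj'⟩
            have hk' := hk6 j' hj'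
            exact hplus ⟨j', hj', by omega⟩
          have hv0 := ihm.2 h0'
          constructor
          · rintro ⟨j', hj', hmj'⟩
            exact absurd ⟨j', hj', hmj'⟩ hminus
          · intro _
            show cfT a (m+2) ≡ 1 [ZMOD 4]
            simp only [cfT, ha, Int.ModEq] at *
            omega
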